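/- Let N be a positive integer, let A = (a_ij) be a nonnegative real N×N matrix, let σ ≥ 0 and let ω ∈ ℝ^N be a nonnegative vector with Σ_{i=1}^N ω_i a_ij = σ ω_j for all j. Let λ > 0 and α ∈ (0,1) satisfy λ(1+α)σ < 1. Suppose ρ : ℝ → ℝ^N and φ : ℝ → ℝ^N are such that for all t ≥ 0 and all i: 0 ≤ ρ_i(t) ≤ 1, 0 ≤ φ_i(t) ≤ 1, and ρ_i is differentiable at t with ρ_i′(t) = −ρ_i(t) + λ φ_i(t)(1−ρ_i(t)) Σ_{j=1}^N a_ij ρ_j(t). Then for all t ≥ 0, Σ_{i=1}^N ω_i ρ_i(t) ≤ (Σ_{i=1}^N ω_i ρ_i(0)) · exp((λ(1+α)σ − 1)t). -/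

import Mathlib

/-- Quantitative decay of the Lyapunov function `V(t) = Σ_i ω_i ρ_i(t)` for the
quenched mean-field SIS system below the threshold `λ(1+α)σ < 1`:
`V(t) ≤ V(0) · exp((λ(1+α)σ − 1) t)` for all `t ≥ 0`. -/
theorem stmt_8 (N : ℕ) (hN : 0 < N) (A : Fin N → Fin N → ℝ)
    (hA : ∀ i j, 0 ≤ A i j)
    (σ : ℝ) (hσ : 0 ≤ σ)
    (ω : Fin N → ℝ) (hω : ∀ i, 0 ≤ ω i)
    (heig : ∀ j, ∑ i, ω i * A i j = σ * ω j)
    (lam α : ℝ) (hlam : 0 < lam) (hα : α ∈ Set.Ioo (0 : ℝ) 1)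
    (hthr : lam * (1 + α) * σ < 1)
    (ρ φ : ℝ → Fin N → ℝ)
    (hρ : ∀ t : ℝ, 0 ≤ t → ∀ i, ρ t i ∈ Set.Icc (0 : ℝ) 1)
    (hφ : ∀ t : ℝ, 0 ≤ t → ∀ i, φ t i ∈ Set.Icc (0 : ℝ) 1)
    (hode : ∀ t : ℝ, 0 ≤ t → ∀ i,
      HasDerivAt (fun s => ρ s i)
        (-(ρ t i) + lam * φ t i * (1 - ρ t i) * ∑ j, A i j * ρ t j) t) :
    ∀ t : ℝ, 0 ≤ t →
      ∑ i, ω i * ρ t i ≤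
        (∑ i, ω i * ρ 0 i) * Real.exp ((lam * (1 + α) * σ - 1) * t) := by
  obtain ⟨hα0, hα1⟩ := hα
  set c : ℝ := lam * (1 + α) * σ - 1 with hc
  set V : ℝ → ℝ := fun t => ∑ i, ω i * ρ t i with hVdef
  have hVnonneg : ∀ t : ℝ, 0 ≤ t → 0 ≤ V t := fun t ht =>
    Finset.sum_nonneg fun i _ => mul_nonneg (hω i) (hρ t ht i).1
  have hVderiv : ∀ t : ℝ, 0 ≤ t → HasDerivAt V
      (∑ i, ω i * (-(ρ t i) + lam * φ t i * (1 - ρ t i) * ∑ j, A i j * ρ t j)) t := by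
    intro t ht
    exact HasDerivAt.fun_sum fun i _ => (hode t ht i).const_mul (ω i)
  have hbound : ∀ t : ℝ, 0 ≤ t →
      (∑ i, ω i * (-(ρ t i) + lam * φ t i * (1 - ρ t i) * ∑ j, A i j * ρ t j))
        ≤ c * V t := by
    intro t ht
    have hS : ∀ i, 0 ≤ ∑ j, A i j * ρ t j := fun i =>
      Finset.sum_nonneg fun j _ => mul_nonneg (hA i j) (hρ t ht j).1
    have step1 : (∑ i, ω i * (-(ρ t i) + lam * φ t i * (1 - ρ t i) * ∑ j, A i j * ρ t j))
        ≤ ∑ i, ω i * (-(ρ t i) + lam * ∑ j, A i j * ρ t j) := by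
      apply Finset.sum_le_sum
      intro i _
      apply mul_le_mul_of_nonneg_left _ (hω i)
      apply add_le_add_right
      have hφρ : φ t i * (1 - ρ t i) ≤ 1 := by
        calc φ t i * (1 - ρ t i) ≤ 1 * 1 :=
          mul_le_mul (hφ t ht i).2 (by linarith [(hρ t ht i).1]) (by linarith [(hρ t ht i).2]) one_pos.le
        _ = 1 := by ring
      have hφρ0 : 0 ≤ φ t i * (1 - ρ t i) :=
        mul_nonneg (hφ t ht i).1 (by linarith [(hρ t ht i).2])
      calc lam * φ t i * (1 - ρ t i) * ∑ j, A i j * ρ t j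
          = (φ t i * (1 - ρ t i)) * (lam * ∑ j, A i j * ρ t j) := by ring
        _ ≤ 1 * (lam * ∑ j, A i j * ρ t j) :=
          mul_le_mul_of_nonneg_right hφρ (mul_nonneg hlam.le (hS i))
        _ = lam * ∑ j, A i j * ρ t j := by ring
    have step2 : (∑ i, ω i * (-(ρ t i) + lam * ∑ j, A i j * ρ t j))
        = (lam * σ - 1) * V t := by
      have hswap : (∑ i, ω i * ∑ j, A i j * ρ t j) = σ * ∑ j, ω j * ρ t j := by
        calc (∑ i, ω i * ∑ j, A i j * ρ t j)
            = ∑ i, ∑ j, ω i * A i j * ρ t j := by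
              apply Finset.sum_congr rfl; intro i _
              rw [Finset.mul_sum]; apply Finset.sum_congr rfl; intro j _; ring
          _ = ∑ j, ∑ i, ω i * A i j * ρ t j := Finset.sum_comm
          _ = ∑ j, σ * ω j * ρ t j := by
              apply Finset.sum_congr rfl; intro j _
              rw [← Finset.sum_mul, heig j]
          _ = σ * ∑ j, ω j * ρ t j := by
              rw [Finset.mul_sum]; apply Finset.sum_congr rfl; intro j _; ring
      have : (∑ i, ω i * (-(ρ t i) + lam * ∑ j, A i j * ρ t j))
          = -(∑ i, ω i * ρ t i) + lam * ∑ i, ω i * ∑ j, A i j * ρ t j := by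
        rw [Finset.mul_sum, ← Finset.sum_neg_distrib, ← Finset.sum_add_distrib]
        apply Finset.sum_congr rfl; intro i _; ring
      rw [this, hswap]
      simp only [hVdef]; ring
    have step3 : (lam * σ - 1) * V t ≤ c * V t := by
      apply mul_le_mul_of_nonneg_right _ (hVnonneg t ht)
      have : lam * σ ≤ lam * (1 + α) * σ := by nlinarith [mul_nonneg (mul_nonneg hlam.le hα0.le) hσ]
      simp only [hc]; linarith
    linarith [step1, step2 ▸ step1]
  -- consider g t = V t * exp (-c * t)
  set g : ℝ → ℝ := fun t => V t * Real.exp (-c * t) with hgdef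
  have hg : ∀ t : ℝ, 0 ≤ t → HasDerivAt g
      ((∑ i, ω i * (-(ρ t i) + lam * φ t i * (1 - ρ t i) * ∑ j, A i j * ρ t j))
        * Real.exp (-c * t) + V t * (Real.exp (-c * t) * -c)) t := by
    intro t ht
    have he : HasDerivAt (fun s : ℝ => Real.exp (-c * s)) (Real.exp (-c * t) * -c) t := by
      have h1 : HasDerivAt (fun s : ℝ => -c * s) (-c) t := by
        simpa using (hasDerivAt_id t).const_mul (-c)
      exact h1.exp
    exact (hVderiv t ht).mul he
  have hanti : AntitoneOn g (Set.Ici (0 : ℝ)) := by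
    apply antitoneOn_of_deriv_nonpos (convex_Ici 0)
    · intro t ht
      exact (hg t ht).continuousAt.continuousWithinAt
    · intro t ht
      rw [interior_Ici] at ht
      exact (hg t ht.le).differentiableAt.differentiableWithinAt
    · intro t ht
      rw [interior_Ici] at ht
      rw [(hg t ht.le).deriv]
      have h1 := hbound t ht.le
      have h2 : (0 : ℝ) < Real.exp (-c * t) := Real.exp_pos _
      nlinarith [hVnonneg t ht.le]
  intro t ht
  have hgt : g t ≤ g 0 := hanti Set.self_mem_Ici ht ht
  have hg0 : g 0 = V 0 := by simp [hgdef]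
  have hexp : (0 : ℝ) < Real.exp (-c * t) := Real.exp_pos _
  have : V t * Real.exp (-c * t) ≤ V 0 := by rw [← hg0]; exact hgt
  have hfin : V t ≤ V 0 * Real.exp (c * t) := by
    have := mul_le_mul_of_nonneg_right this (Real.exp_pos (c * t)).le
    rwa [mul_assoc, ← Real.exp_add, neg_mul, neg_add_cancel, Real.exp_zero, mul_one] at this
  simpa [hVdef, hc] using hfin
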